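/- Let (G, col) be an α-edge-colored graph and let k ∈ ℕ. Let v be a vertex of G with exactly two neighbors u and w, where u ≠ w, u and w are not adjacent in G, and col({v,u}) = col({v,w}) = C. Let G' be the graph obtained from G by deleting v and adding the edge {u,w}, and let col' be the coloring of G' with col'({u,w}) = C and col'(e) = col(e) for every other edge e of G'. Then (G, col) has a simultaneous feedback edge set of size at most k if and only if (G', col') has a simultaneous feedback edge set of size at most k. -/

import Mathlib

/-- For an `α`-edge-colored graph `(G, col)`, the color-`i` graph `G_i`: the spanning
subgraph of `G` whose edges are those edges of `G` whose color set contains `i`. -/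
def colorGraph {V : Type*} {α : ℕ} (G : SimpleGraph V) (col : Sym2 V → Set (Fin α))
    (i : Fin α) : SimpleGraph V :=
  SimpleGraph.fromEdgeSet {e | e ∈ G.edgeSet ∧ i ∈ col e}

/-- A simultaneous feedback edge set of an `α`-edge-colored graph `(G, col)`: a set
`S ⊆ E(G)` such that for every color `i`, the graph `G_i − S` is acyclic. -/
def IsSimFES {V : Type*} {α : ℕ} (G : SimpleGraph V) (col : Sym2 V → Set (Fin α))
    (S : Set (Sym2 V)) : Prop :=
  S ⊆ G.edgeSet ∧ ∀ i : Fin α, ((colorGraph G col i).deleteEdges S).IsAcyclic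

private lemma stmt12_lift_walk {V : Type*} {v : V} {H : SimpleGraph V}
    {K : SimpleGraph {x : V // x ≠ v}}
    (hHK : ∀ a b : {x : V // x ≠ v}, H.Adj a b → K.Adj a b) :
    ∀ {x y : V} (W : H.Walk x y) (hx : x ≠ v) (hy : y ≠ v), v ∉ W.support →
      ∃ W' : K.Walk ⟨x, hx⟩ ⟨y, hy⟩,
        W'.support.map Subtype.val = W.support ∧
        W'.edges.map (Sym2.map Subtype.val) = W.edges := by
  intro x y W
  induction W with
  | nil => intro hx hy _; exact ⟨SimpleGraph.Walk.nil, by simp, by simp⟩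
  | @cons a b c h p ih =>
    intro hx hy hv
    rw [SimpleGraph.Walk.support_cons, List.mem_cons] at hv
    push_neg at hv
    have hb : b ≠ v := fun hb => hv.2 (hb ▸ p.start_mem_support)
    obtain ⟨W', hs, he⟩ := ih hb hy hv.2
    exact ⟨SimpleGraph.Walk.cons (hHK ⟨a, hx⟩ ⟨b, hb⟩ h) W', by simp [hs], by simp [he]⟩

private lemma stmt12_tail_map {α β : Type*} (f : α → β) (l : List α) :
    (l.map f).tail = l.tail.map f := by cases l <;> simp

theorem stmt_12 {V : Type*} [Fintype V] [DecidableEq V] {α : ℕ} (G : SimpleGraph V)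
    (col : Sym2 V → Set (Fin α)) (k : ℕ) (v u w : V) (huw : u ≠ w)
    (hnbr : G.neighborSet v = {u, w}) (hadj : ¬G.Adj u w)
    (C : Set (Fin α)) (hcu : col s(v, u) = C) (hcw : col s(v, w) = C)
    (G' : SimpleGraph {x : V // x ≠ v})
    (hG' : ∀ a b : {x : V // x ≠ v},
        G'.Adj a b ↔ G.Adj (a : V) (b : V) ∨
          ((a : V) = u ∧ (b : V) = w) ∨ ((a : V) = w ∧ (b : V) = u))
    (col' : Sym2 {x : V // x ≠ v} → Set (Fin α))
    (hcol' : ∀ a b : {x : V // x ≠ v},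
        col' s(a, b) =
          if ((a : V) = u ∧ (b : V) = w) ∨ ((a : V) = w ∧ (b : V) = u) then C
          else col s((a : V), (b : V))) :
    (∃ S : Finset (Sym2 V), S.card ≤ k ∧ IsSimFES G col (S : Set (Sym2 V))) ↔
    (∃ S : Finset (Sym2 {x : V // x ≠ v}), S.card ≤ k ∧
        IsSimFES G' col' (S : Set (Sym2 {x : V // x ≠ v}))) := by
  classical
  have hGvu : G.Adj v u := by
    rw [← SimpleGraph.mem_neighborSet, hnbr]; exact Set.mem_insert _ _
  have hGvw : G.Adj v w := by
    rw [← SimpleGraph.mem_neighborSet, hnbr]; exact Set.mem_insert_of_mem _ rfl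
  have hune : u ≠ v := hGvu.ne'
  have hwne : w ≠ v := hGvw.ne'
  have hnb : ∀ x, G.Adj v x → x = u ∨ x = w := by
    intro x hx
    have hx' : x ∈ G.neighborSet v := hx
    rw [hnbr] at hx'
    simpa using hx'
  set u' : {x : V // x ≠ v} := ⟨u, hune⟩ with hu'
  set w' : {x : V // x ≠ v} := ⟨w, hwne⟩ with hw'
  have hu'w' : u' ≠ w' := fun hx => huw (congrArg Subtype.val hx)
  have hadjH : ∀ (i : Fin α) (T : Set (Sym2 V)) (x y : V),
      ((colorGraph G col i).deleteEdges T).Adj x y ↔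
        (G.Adj x y ∧ i ∈ col s(x, y)) ∧ s(x, y) ∉ T := by
    intro i T x y
    simp only [colorGraph, SimpleGraph.deleteEdges_adj, SimpleGraph.fromEdgeSet_adj,
      Set.mem_setOf_eq, SimpleGraph.mem_edgeSet]
    constructor
    · rintro ⟨⟨⟨h1, h2⟩, _⟩, h4⟩; exact ⟨⟨h1, h2⟩, h4⟩
    · rintro ⟨⟨h1, h2⟩, h4⟩; exact ⟨⟨⟨h1, h2⟩, h1.ne⟩, h4⟩
  have hadjH' : ∀ (i : Fin α) (T : Set (Sym2 {x : V // x ≠ v})) (x y : {x : V // x ≠ v}),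
      ((colorGraph G' col' i).deleteEdges T).Adj x y ↔
        (G'.Adj x y ∧ i ∈ col' s(x, y)) ∧ s(x, y) ∉ T := by
    intro i T x y
    simp only [colorGraph, SimpleGraph.deleteEdges_adj, SimpleGraph.fromEdgeSet_adj,
      Set.mem_setOf_eq, SimpleGraph.mem_edgeSet]
    constructor
    · rintro ⟨⟨⟨h1, h2⟩, _⟩, h4⟩; exact ⟨⟨h1, h2⟩, h4⟩
    · rintro ⟨⟨h1, h2⟩, h4⟩; exact ⟨⟨⟨h1, h2⟩, h1.ne⟩, h4⟩
  have hspecial : ∀ a b : {x : V // x ≠ v},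
      (((a : V) = u ∧ (b : V) = w) ∨ ((a : V) = w ∧ (b : V) = u)) ↔ s(a, b) = s(u', w') := by
    intro a b
    rw [Sym2.eq_iff]
    constructor
    · rintro (⟨h1, h2⟩ | ⟨h1, h2⟩)
      · exact Or.inl ⟨Subtype.ext h1, Subtype.ext h2⟩
      · exact Or.inr ⟨Subtype.ext h1, Subtype.ext h2⟩
    · rintro (⟨rfl, rfl⟩ | ⟨rfl, rfl⟩)
      · exact Or.inl ⟨rfl, rfl⟩
      · exact Or.inr ⟨rfl, rfl⟩
  constructor
  · -- forward direction
    rintro ⟨S, hScard, hSsub, hSac⟩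
    set g : V → {x : V // x ≠ v} := fun x => if h : x = v then u' else ⟨x, h⟩ with hg
    have hgx : ∀ (x : V) (hx : x ≠ v), g x = ⟨x, hx⟩ := fun x hx => dif_neg hx
    set f : Sym2 V → Sym2 {x : V // x ≠ v} :=
      fun e => if e = s(v, u) ∨ e = s(v, w) then s(u', w') else e.map g with hf
    have hfS : ∀ a b : {x : V // x ≠ v}, s((a : V), (b : V)) ∈ S → s(a, b) ∈ S.image f := by
      intro a b hm
      have hcond : ¬(s((a : V), (b : V)) = s(v, u) ∨ s((a : V), (b : V)) = s(v, w)) := by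
        rintro (hc | hc) <;>
        · rw [Sym2.eq_iff] at hc
          rcases hc with ⟨h1, _⟩ | ⟨_, h2⟩
          · exact a.2 h1
          · exact b.2 h2
      have hfe : f s((a : V), (b : V)) = s(a, b) := by
        rw [hf]; dsimp only
        rw [if_neg hcond, Sym2.map_pair_eq, hgx _ a.2, hgx _ b.2]
      exact hfe ▸ Finset.mem_image_of_mem f hm
    have hfvu : s(v, u) ∈ S → s(u', w') ∈ S.image f := by
      intro hm
      have hfe : f s(v, u) = s(u', w') := by rw [hf]; dsimp only; rw [if_pos (Or.inl rfl)]
      exact hfe ▸ Finset.mem_image_of_mem f hm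
    have hfvw : s(v, w) ∈ S → s(u', w') ∈ S.image f := by
      intro hm
      have hfe : f s(v, w) = s(u', w') := by rw [hf]; dsimp only; rw [if_pos (Or.inr rfl)]
      exact hfe ▸ Finset.mem_image_of_mem f hm
    refine ⟨S.image f, le_trans Finset.card_image_le hScard, ?_, ?_⟩
    · -- edge subset
      intro e' he'
      rw [Finset.mem_coe, Finset.mem_image] at he'
      obtain ⟨e, heS, rfl⟩ := he'
      have heG : e ∈ G.edgeSet := hSsub (Finset.mem_coe.mpr heS)
      clear heS
      revert heG
      induction e using Sym2.ind with
      | _ x y =>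
        intro heG
        rw [SimpleGraph.mem_edgeSet] at heG
        rw [hf]; dsimp only
        by_cases hc : s(x, y) = s(v, u) ∨ s(x, y) = s(v, w)
        · rw [if_pos hc, SimpleGraph.mem_edgeSet, hG']
          exact Or.inr (Or.inl ⟨rfl, rfl⟩)
        · have hxv : x ≠ v := by
            rintro rfl
            rcases hnb y heG with rfl | rfl
            · exact hc (Or.inl rfl)
            · exact hc (Or.inr rfl)
          have hyv : y ≠ v := by
            rintro rfl
            rcases hnb x heG.symm with rfl | rfl
            · exact hc (Or.inl Sym2.eq_swap)
            · exact hc (Or.inr Sym2.eq_swap)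
          rw [if_neg hc, Sym2.map_pair_eq, hgx _ hxv, hgx _ hyv, SimpleGraph.mem_edgeSet, hG']
          exact Or.inl heG
    · -- acyclicity
      intro i r c' hc'
      have hHK : ∀ a b : {x : V // x ≠ v},
          (((colorGraph G' col' i).deleteEdges ↑(S.image f)).deleteEdges {s(u', w')}).Adj a b →
            ((colorGraph G col i).deleteEdges ↑S).Adj (a : V) (b : V) := by
        intro a b hab
        rw [SimpleGraph.deleteEdges_adj] at hab
        obtain ⟨hab, hne⟩ := hab
        rw [Set.mem_singleton_iff] at hne
        rw [hadjH'] at hab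
        obtain ⟨⟨hGab, hicol⟩, hnS'⟩ := hab
        have hns : ¬(((a : V) = u ∧ (b : V) = w) ∨ ((a : V) = w ∧ (b : V) = u)) :=
          fun hcond => hne ((hspecial a b).mp hcond)
        have hGab' : G.Adj (a : V) (b : V) := by
          rcases (hG' a b).mp hGab with h | h
          · exact h
          · exact absurd h hns
        have hicol' : i ∈ col s((a : V), (b : V)) := by
          rw [hcol' a b, if_neg hns] at hicol; exact hicol
        rw [hadjH]
        refine ⟨⟨hGab', hicol'⟩, fun hm => hnS' ?_⟩
        exact Finset.mem_coe.mpr (hfS a b (Finset.mem_coe.mp hm))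
      set φ : (((colorGraph G' col' i).deleteEdges ↑(S.image f)).deleteEdges {s(u', w')}) →g
          ((colorGraph G col i).deleteEdges ↑S) :=
        ⟨Subtype.val, fun {a b} h => hHK a b h⟩ with hφ
      have hφinj : Function.Injective ⇑φ := Subtype.val_injective
      by_cases hE : s(u', w') ∈ c'.edges
      · -- the new edge is used
        have key : ∃ (_h : ((colorGraph G' col' i).deleteEdges ↑(S.image f)).Adj u' w')
            (P0 : ((colorGraph G' col' i).deleteEdges ↑(S.image f)).Walk w' u'),
            P0.IsPath ∧ s(u', w') ∉ P0.edges := by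
          have hu'mem : u' ∈ c'.support := c'.fst_mem_support_of_mem_edges hE
          have hdcyc := hc'.rotate hu'mem
          have hEd : s(u', w') ∈ (c'.rotate u' hu'mem).edges :=
            (SimpleGraph.Walk.rotate_edges c' u' hu'mem).mem_iff.mpr hE
          obtain ⟨d, hdcyc, hEd⟩ :
              ∃ d : ((colorGraph G' col' i).deleteEdges ↑(S.image f)).Walk u' u',
                d.IsCycle ∧ s(u', w') ∈ d.edges := ⟨_, hdcyc, hEd⟩
          cases d with
          | nil => simp at hEd
          | @cons _ z _ h1 p1 =>
            rw [SimpleGraph.Walk.cons_isCycle_iff] at hdcyc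
            obtain ⟨hp1path, hp1e⟩ := hdcyc
            rw [SimpleGraph.Walk.edges_cons, List.mem_cons] at hEd
            rcases hEd with hE1 | hE2
            · -- first edge is the new edge
              have hz : z = w' := by
                rw [Sym2.eq_iff] at hE1
                rcases hE1 with ⟨_, h2⟩ | ⟨_, h2'⟩
                · exact h2.symm
                · exact absurd h2'.symm hu'w'
              subst hz
              exact ⟨h1, p1, hp1path, hp1e⟩
            · -- the new edge is inside p1, hence the last edge of p1
              obtain ⟨z2, h2, q2, hq2⟩ := SimpleGraph.Walk.exists_eq_cons_of_ne h1.ne p1.reverse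
              have hrevpath : p1.reverse.IsPath := hp1path.reverse
              rw [hq2, SimpleGraph.Walk.cons_isPath_iff] at hrevpath
              obtain ⟨hq2path, hu'q2⟩ := hrevpath
              have hmem : s(u', w') ∈ p1.reverse.edges := by
                rw [SimpleGraph.Walk.edges_reverse, List.mem_reverse]; exact hE2
              rw [hq2, SimpleGraph.Walk.edges_cons, List.mem_cons] at hmem
              rcases hmem with hE3 | hE4
              · have hz2 : z2 = w' := by
                  rw [Sym2.eq_iff] at hE3
                  rcases hE3 with ⟨_, h2'⟩ | ⟨_, h3'⟩
                  · exact h2'.symm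
                  · exact absurd h3'.symm hu'w'
                subst hz2
                have hzw' : z ≠ w' := by
                  rintro rfl
                  exact hp1e hE2
                refine ⟨h2, q2.concat h1.symm, ?_, ?_⟩
                · rw [← SimpleGraph.Walk.isPath_reverse_iff, SimpleGraph.Walk.reverse_concat,
                    SimpleGraph.Walk.cons_isPath_iff]
                  refine ⟨hq2path.reverse, ?_⟩
                  rw [SimpleGraph.Walk.support_reverse, List.mem_reverse]
                  exact hu'q2
                · rw [SimpleGraph.Walk.edges_concat]
                  intro hmem2
                  rw [List.concat_eq_append, List.mem_append, List.mem_singleton] at hmem2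
                  rcases hmem2 with h | h
                  · exact hu'q2 (q2.fst_mem_support_of_mem_edges h)
                  · rw [Sym2.eq_iff] at h
                    rcases h with ⟨h1', _⟩ | ⟨_, h2'⟩
                    · exact h1.ne h1'
                    · exact hzw' h2'.symm
              · exfalso
                exact hu'q2 (q2.fst_mem_support_of_mem_edges hE4)
        obtain ⟨hAdj, P0, hP0path, hP0e⟩ := key
        have hAdj' := hAdj
        rw [hadjH'] at hAdj'
        obtain ⟨⟨hG'uw, hicol⟩, hnS'⟩ := hAdj'
        have hiC : i ∈ C := by
          have hcc := hcol' u' w'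
          rw [if_pos (Or.inl ⟨rfl, rfl⟩)] at hcc
          rwa [hcc] at hicol
        have hSvu : s(v, u) ∉ (S : Set (Sym2 V)) := by
          intro hm
          exact hnS' (Finset.mem_coe.mpr (hfvu (Finset.mem_coe.mp hm)))
        have hSvw : s(v, w) ∉ (S : Set (Sym2 V)) := by
          intro hm
          exact hnS' (Finset.mem_coe.mpr (hfvw (Finset.mem_coe.mp hm)))
        have hcond : ∀ e ∈ P0.edges, e ∉ ({s(u', w')} : Set (Sym2 {x : V // x ≠ v})) := by
          intro e he hmem
          rw [Set.mem_singleton_iff] at hmem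
          exact hP0e (hmem ▸ he)
        set P : ((colorGraph G col i).deleteEdges ↑S).Walk w u :=
          (P0.toDeleteEdges ({s(u', w')} : Set (Sym2 {x : V // x ≠ v})) hcond).map φ with hP
        have hPpath : P.IsPath := by
          rw [hP]
          exact SimpleGraph.Walk.map_isPath_of_injective hφinj
            (SimpleGraph.Walk.IsPath.transfer _ hP0path)
        have hvP : v ∉ P.support := by
          rw [hP, SimpleGraph.Walk.support_map]
          intro hmem
          obtain ⟨x, _, hx⟩ := List.mem_map.mp hmem
          exact x.2 hx
        have h_vw : ((colorGraph G col i).deleteEdges ↑S).Adj v w := by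
          rw [hadjH]
          exact ⟨⟨hGvw, by rw [hcw]; exact hiC⟩, hSvw⟩
        have h_uv : ((colorGraph G col i).deleteEdges ↑S).Adj u v := by
          rw [hadjH]
          refine ⟨⟨hGvu.symm, ?_⟩, ?_⟩
          · rw [Sym2.eq_swap, hcu]; exact hiC
          · rw [Sym2.eq_swap]; exact hSvu
        have hQpath : (P.concat h_uv).IsPath := by
          rw [← SimpleGraph.Walk.isPath_reverse_iff, SimpleGraph.Walk.reverse_concat,
            SimpleGraph.Walk.cons_isPath_iff]
          refine ⟨hPpath.reverse, ?_⟩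
          rw [SimpleGraph.Walk.support_reverse, List.mem_reverse]
          exact hvP
        have hcyc : (SimpleGraph.Walk.cons h_vw (P.concat h_uv)).IsCycle := by
          rw [SimpleGraph.Walk.cons_isCycle_iff]
          refine ⟨hQpath, ?_⟩
          rw [SimpleGraph.Walk.edges_concat]
          intro hmem
          rw [List.concat_eq_append, List.mem_append, List.mem_singleton] at hmem
          rcases hmem with h | h
          · exact hvP (P.fst_mem_support_of_mem_edges h)
          · rw [Sym2.eq_iff] at h
            rcases h with ⟨h1, _⟩ | ⟨_, h2⟩
            · exact hune h1.symm
            · exact huw h2.symm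
        exact hSac i _ hcyc
      · -- the new edge is not used
        have hcond : ∀ e ∈ c'.edges, e ∉ ({s(u', w')} : Set (Sym2 {x : V // x ≠ v})) := by
          intro e he hmem
          rw [Set.mem_singleton_iff] at hmem
          exact hE (hmem ▸ he)
        exact hSac i ((c'.toDeleteEdges ({s(u', w')} : Set (Sym2 {x : V // x ≠ v})) hcond).map φ)
          (SimpleGraph.Walk.IsCycle.map hφinj (SimpleGraph.Walk.IsCycle.transfer hc' _))
  · -- backward direction
    rintro ⟨S', hScard, hSsub', hSac'⟩
    set f' : Sym2 {x : V // x ≠ v} → Sym2 V :=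
      fun e => if e = s(u', w') then s(v, u) else e.map Subtype.val with hf'
    have hf'mem : ∀ a b : {x : V // x ≠ v}, s(a, b) ∈ S' → s(a, b) ≠ s(u', w') →
        s((a : V), (b : V)) ∈ S'.image f' := by
      intro a b hm hne
      have hfe : f' s(a, b) = s((a : V), (b : V)) := by
        rw [hf']; dsimp only; rw [if_neg hne, Sym2.map_pair_eq]
      exact hfe ▸ Finset.mem_image_of_mem f' hm
    have hSvw : s(v, w) ∉ (↑(S'.image f') : Set (Sym2 V)) := by
      intro hm
      rw [Finset.mem_coe, Finset.mem_image] at hm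
      obtain ⟨e, heS, hfe⟩ := hm
      rw [hf'] at hfe; dsimp only at hfe
      by_cases hc : e = s(u', w')
      · rw [if_pos hc, Sym2.eq_iff] at hfe
        rcases hfe with ⟨_, h2⟩ | ⟨h1, h2⟩
        · exact huw h2
        · exact hwne h1.symm
      · rw [if_neg hc] at hfe
        induction e using Sym2.ind with
        | _ a b =>
          rw [Sym2.map_pair_eq, Sym2.eq_iff] at hfe
          rcases hfe with ⟨h1, _⟩ | ⟨_, h2⟩
          · exact a.2 h1
          · exact b.2 h2
    have hSvu : s(v, u) ∈ (↑(S'.image f') : Set (Sym2 V)) → s(u', w') ∈ S' := by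
      intro hm
      rw [Finset.mem_coe, Finset.mem_image] at hm
      obtain ⟨e, heS, hfe⟩ := hm
      rw [hf'] at hfe; dsimp only at hfe
      by_cases hc : e = s(u', w')
      · exact hc ▸ heS
      · exfalso
        rw [if_neg hc] at hfe
        induction e using Sym2.ind with
        | _ a b =>
          rw [Sym2.map_pair_eq, Sym2.eq_iff] at hfe
          rcases hfe with ⟨h1, _⟩ | ⟨_, h2⟩
          · exact a.2 h1
          · exact b.2 h2
    refine ⟨S'.image f', le_trans Finset.card_image_le hScard, ?_, ?_⟩
    · -- edge subset
      intro e he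
      rw [Finset.mem_coe, Finset.mem_image] at he
      obtain ⟨e', heS, rfl⟩ := he
      have heG : e' ∈ G'.edgeSet := hSsub' (Finset.mem_coe.mpr heS)
      clear heS
      revert heG
      induction e' using Sym2.ind with
      | _ a b =>
        intro heG
        rw [SimpleGraph.mem_edgeSet] at heG
        rw [hf']; dsimp only
        by_cases hc : s(a, b) = s(u', w')
        · rw [if_pos hc, SimpleGraph.mem_edgeSet]; exact hGvu
        · rw [if_neg hc, Sym2.map_pair_eq, SimpleGraph.mem_edgeSet]
          rcases (hG' a b).mp heG with h | h
          · exact h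
          · exact absurd ((hspecial a b).mp h) hc
    · -- acyclicity
      intro i x c hc
      have hHK : ∀ a b : {x : V // x ≠ v},
          ((colorGraph G col i).deleteEdges ↑(S'.image f')).Adj (a : V) (b : V) →
            ((colorGraph G' col' i).deleteEdges ↑S').Adj a b := by
        intro a b hab
        rw [hadjH] at hab
        obtain ⟨⟨hGab, hicol⟩, hnS⟩ := hab
        have hns : ¬(((a : V) = u ∧ (b : V) = w) ∨ ((a : V) = w ∧ (b : V) = u)) := by
          rintro (⟨h1, h2⟩ | ⟨h1, h2⟩)
          · exact hadj (h1 ▸ h2 ▸ hGab)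
          · exact hadj (h1 ▸ h2 ▸ hGab).symm
        have hne : s(a, b) ≠ s(u', w') := fun hx => hns ((hspecial a b).mpr hx)
        rw [hadjH']
        refine ⟨⟨(hG' a b).mpr (Or.inl hGab), ?_⟩, ?_⟩
        · rw [hcol' a b, if_neg hns]; exact hicol
        · intro hm
          exact hnS (Finset.mem_coe.mpr (hf'mem a b (Finset.mem_coe.mp hm) hne))
      by_cases hv : v ∈ c.support
      · -- cycle passes through v
        have hc0 := hc.rotate hv
        obtain ⟨d, hdcyc⟩ :
            ∃ d : ((colorGraph G col i).deleteEdges ↑(S'.image f')).Walk v v, d.IsCycle :=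
          ⟨_, hc0⟩
        cases d with
        | nil => exact SimpleGraph.Walk.IsCycle.not_of_nil hdcyc
        | @cons _ b _ h1 p1 =>
          rw [SimpleGraph.Walk.cons_isCycle_iff] at hdcyc
          obtain ⟨hp1path, hp1e⟩ := hdcyc
          obtain ⟨d0, h2, q, hq⟩ := SimpleGraph.Walk.exists_eq_cons_of_ne h1.ne p1.reverse
          have hrevpath : p1.reverse.IsPath := hp1path.reverse
          rw [hq, SimpleGraph.Walk.cons_isPath_iff] at hrevpath
          obtain ⟨hqpath, hvq⟩ := hrevpath
          have hGvb : G.Adj v b := ((hadjH i _ v b).mp h1).1.1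
          have hGvd : G.Adj v d0 := ((hadjH i _ v d0).mp h2).1.1
          have hbd : b ≠ d0 := by
            rintro rfl
            apply hp1e
            have : s(v, b) ∈ p1.reverse.edges := by
              rw [hq, SimpleGraph.Walk.edges_cons]; exact List.mem_cons_self
            rw [SimpleGraph.Walk.edges_reverse, List.mem_reverse] at this
            exact this
          obtain ⟨q', hqs, hqe⟩ := stmt12_lift_walk hHK q h2.ne' h1.ne' hvq
          -- the two colored-v-edges are not in S'.image f'
          have hvbS : s(v, b) ∉ (↑(S'.image f') : Set (Sym2 V)) := ((hadjH i _ v b).mp h1).2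
          have hvdS : s(v, d0) ∉ (↑(S'.image f') : Set (Sym2 V)) := ((hadjH i _ v d0).mp h2).2
          have hvuS : s(v, u) ∉ (↑(S'.image f') : Set (Sym2 V)) := by
            rcases hnb b hGvb with rfl | rfl
            · exact hvbS
            · rcases hnb d0 hGvd with rfl | rfl
              · exact hvdS
              · exact absurd rfl hbd
          have hbd' : (b = u ∧ d0 = w) ∨ (b = w ∧ d0 = u) := by
            rcases hnb b hGvb with rfl | rfl <;> rcases hnb d0 hGvd with h | h
            · exact absurd h.symm hbd
            · exact Or.inl ⟨rfl, h⟩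
            · exact Or.inr ⟨rfl, h⟩
            · exact absurd h.symm hbd
          have hnew : ((colorGraph G' col' i).deleteEdges ↑S').Adj ⟨b, h1.ne'⟩ ⟨d0, h2.ne'⟩ := by
            rw [hadjH']
            refine ⟨⟨(hG' _ _).mpr (Or.inr hbd'), ?_⟩, ?_⟩
            · rw [hcol' _ _, if_pos hbd']
              have : i ∈ col s(v, b) := ((hadjH i _ v b).mp h1).1.2
              rcases hnb b hGvb with rfl | rfl
              · rwa [hcu] at this
              · rwa [hcw] at this
            · intro hm
              have heq : s((⟨b, h1.ne'⟩ : {x : V // x ≠ v}), (⟨d0, h2.ne'⟩ : {x : V // x ≠ v}))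
                  = s(u', w') := by
                apply (hspecial _ _).mp
                exact hbd'
              rw [heq] at hm
              apply hvuS
              rw [Finset.mem_coe, Finset.mem_image]
              refine ⟨s(u', w'), Finset.mem_coe.mp hm, ?_⟩
              rw [hf']; dsimp only; rw [if_pos rfl]
          have hq'path : q'.IsPath := by
            rw [SimpleGraph.Walk.isPath_def]
            exact List.Nodup.of_map Subtype.val
              (by rw [hqs]; exact hqpath.support_nodup)
          have hcyc' : (SimpleGraph.Walk.cons hnew q').IsCycle := by
            rw [SimpleGraph.Walk.cons_isCycle_iff]
            refine ⟨hq'path, ?_⟩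
            intro hm
            have : s((b : V), (d0 : V)) ∈ q.edges := by
              rw [← hqe]
              exact List.mem_map_of_mem (f := Sym2.map Subtype.val) hm
            have hbdE := q.edges_subset_edgeSet this
            rw [SimpleGraph.mem_edgeSet, hadjH] at hbdE
            have hGbd : G.Adj b d0 := hbdE.1.1
            rcases hbd' with ⟨h1', h2'⟩ | ⟨h1', h2'⟩
            · exact hadj (h1' ▸ h2' ▸ hGbd)
            · exact hadj (h1' ▸ h2' ▸ hGbd).symm
          exact hSac' i _ hcyc'
      · -- cycle avoids v
        have hx : x ≠ v := fun h => hv (h ▸ c.start_mem_support)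
        obtain ⟨c2, hcs, hce⟩ := stmt12_lift_walk hHK c hx hx hv
        have hc2 : c2.IsCycle := by
          rw [SimpleGraph.Walk.isCycle_def]
          refine ⟨⟨?_⟩, ?_, ?_⟩
          · exact List.Nodup.of_map (Sym2.map Subtype.val)
              (by rw [hce]; exact hc.isTrail.edges_nodup)
          · intro hnil
            apply hc.not_nil
            rw [SimpleGraph.Walk.nil_iff_length_eq]
            have : c.support.length = 1 := by
              rw [← hcs, hnil]; simp
            have h2 := c.length_support
            omega
          · apply List.Nodup.of_map Subtype.val
            rw [← stmt12_tail_map, hcs]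
            exact hc.support_nodup
        exact hSac' i _ hc2
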